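/- In the setting of the empirical-flow equation, any solution t ↦ s(t) satisfies, for all t in its interval of definition, the competition bounds −log(s(t)/s_m)/(2 R_M (N−1)) ≤ Ĉ_N(s(t), x, μ̂_N(t)) ≤ N/(N−1) − log(s(t)/s_m)/(2 R_M (N−1)). -/

import Mathlib

open MeasureTheory Set

/-- The pairwise competition potential
`C(s, s', d) = log(s'/s_m) / (2 R_M (1 + d²/σ_x²)) · (1 + tanh(log(s'/s)/σ_r))`. -/
noncomputable def pot (sm RM σx σr s s' d : ℝ) : ℝ :=
  Real.log (s' / sm) / (2 * RM * (1 + d ^ 2 / σx ^ 2)) *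
    (1 + Real.tanh (Real.log (s' / s) / σr))

/-- The competition index `C_i^N(t) = (1/(N-1)) Σ_{j≠i} C(s_i(t), s_j(t), |x_i - x_j|)`. -/
noncomputable def cIdx (sm RM σx σr : ℝ) {N : ℕ}
    (x : Fin N → EuclideanSpace ℝ (Fin 2)) (s : Fin N → ℝ → ℝ) (i : Fin N) (t : ℝ) : ℝ :=
  (1 / ((N : ℝ) - 1)) *
    ∑ j ∈ Finset.univ.erase i, pot sm RM σx σr (s i t) (s j t) (dist (x i) (x j))

/-- `s : Fin N → ℝ → ℝ` is a global solution (on `ℝ₊`) of the competition system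
`ds_i/dt = γ_i s_i (log(S_i/s_m)(1 − C_i^N(t)) − log(s_i/s_m))`, `s_i(0) = s_i^0`. -/
def IsCompetitionSol (sm RM σx σr : ℝ) {N : ℕ} (s0 : Fin N → ℝ)
    (x : Fin N → EuclideanSpace ℝ (Fin 2)) (Sa γ : Fin N → ℝ) (s : Fin N → ℝ → ℝ) : Prop :=
  ∀ i, s i 0 = s0 i ∧ ∀ t, 0 ≤ t →
    HasDerivWithinAt (s i)
      (γ i * s i t * (Real.log (Sa i / sm) * (1 - cIdx sm RM σx σr x s i t)
        - Real.log (s i t / sm)))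
      (Set.Ici 0) t


open scoped ENNReal

/-- The population empirical measure
`μ̂_N(t) = (1/N) Σ_i δ_{(s_i(t), x_i, S_i, γ_i)}` on `ℝ × ℝ² × ℝ × ℝ`. -/
noncomputable def empMeas {N : ℕ} (x : Fin N → EuclideanSpace ℝ (Fin 2))
    (Sa γ : Fin N → ℝ) (s : Fin N → ℝ → ℝ) (t : ℝ) :
    Measure (ℝ × EuclideanSpace ℝ (Fin 2) × ℝ × ℝ) :=
  (N : ℝ≥0∞)⁻¹ • ∑ i : Fin N, Measure.dirac (s i t, x i, Sa i, γ i)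

/-- The mean competition potential
`Ĉ_N(s, x, μ) = (N/(N−1)) ∫ C(s, s', |x−x'|) dμ^{s,x}(s',x') − C(s,s,0)/(N−1)`,
where `μ^{s,x}` is the `(s,x)`-marginal of `μ`. -/
noncomputable def hatC (sm RM σx σr : ℝ) (N : ℕ) (s : ℝ) (x : EuclideanSpace ℝ (Fin 2))
    (μ : Measure (ℝ × EuclideanSpace ℝ (Fin 2) × ℝ × ℝ)) : ℝ :=
  ((N : ℝ) / ((N : ℝ) - 1)) *
      (∫ p, pot sm RM σx σr s p.1 (dist x p.2)
        ∂(Measure.map (fun z : ℝ × EuclideanSpace ℝ (Fin 2) × ℝ × ℝ => (z.1, z.2.1)) μ))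
    - pot sm RM σx σr s s 0 / ((N : ℝ) - 1)

open Filter

/-! ### Auxiliary lemmas -/

lemma tanh_bounds' (x : ℝ) : -1 < Real.tanh x ∧ Real.tanh x < 1 := by
  have hc := Real.cosh_pos x
  rw [Real.tanh_eq_sinh_div_cosh]
  constructor
  · rw [lt_div_iff₀ hc]
    have := Real.sinh_lt_cosh (-x)
    simp only [Real.sinh_neg, Real.cosh_neg] at this
    linarith
  · rw [div_lt_one hc]
    exact Real.sinh_lt_cosh x

lemma continuous_tanh' : Continuous Real.tanh := by
  have h : Real.tanh = fun x => Real.sinh x / Real.cosh x :=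
    funext fun x => Real.tanh_eq_sinh_div_cosh x
  rw [h]
  exact Real.continuous_sinh.div Real.continuous_cosh fun x => (Real.cosh_pos x).ne'

lemma pot_mem (sm RM σx σr a s' d : ℝ) (hsm : 0 < sm) (hRM : 0 < RM)
    (hs' : s' ∈ Set.Icc sm (sm * Real.exp RM)) :
    0 ≤ pot sm RM σx σr a s' d ∧ pot sm RM σx σr a s' d < 1 := by
  have hL0 : 0 ≤ Real.log (s' / sm) :=
    Real.log_nonneg ((one_le_div hsm).2 hs'.1)
  have hL : Real.log (s' / sm) ≤ RM := by
    rw [Real.log_le_iff_le_exp (div_pos (lt_of_lt_of_le hsm hs'.1) hsm), div_le_iff₀ hsm]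
    linarith [hs'.2]
  have hdd : (0 : ℝ) ≤ d ^ 2 / σx ^ 2 := div_nonneg (sq_nonneg d) (sq_nonneg σx)
  have hD0 : (0 : ℝ) < 2 * RM * (1 + d ^ 2 / σx ^ 2) := by nlinarith
  obtain ⟨ht1, ht2⟩ := tanh_bounds' (Real.log (s' / a) / σr)
  have hT0 : (0 : ℝ) ≤ 1 + Real.tanh (Real.log (s' / a) / σr) := by linarith
  constructor
  · exact mul_nonneg (div_nonneg hL0 hD0.le) hT0
  · unfold pot
    rw [div_mul_eq_mul_div, div_lt_one hD0]
    nlinarith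

lemma slope_pos_eventually (f : ℝ → ℝ) {a d : ℝ} (ha : 0 ≤ a)
    (hf : HasDerivWithinAt f d (Set.Ici 0) a) (hd : 0 < d) :
    ∀ᶠ t in nhdsWithin a (Set.Ioi a), f a < f t := by
  rw [hasDerivWithinAt_iff_tendsto_slope] at hf
  have hsub : Set.Ioi a ⊆ Set.Ici (0:ℝ) \ {a} := fun t ht =>
    ⟨le_trans ha (le_of_lt ht), by simp only [Set.mem_singleton_iff]; exact ne_of_gt ht⟩
  have h2 : Tendsto (slope f a) (nhdsWithin a (Set.Ioi a)) (nhds d) :=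
    hf.mono_left (nhdsWithin_mono _ hsub)
  filter_upwards [h2.eventually (eventually_gt_nhds hd), self_mem_nhdsWithin] with t hslope hta
  have h4 : 0 < t - a := sub_pos.2 hta
  have h5 := mul_pos hslope h4
  rw [slope_def_field, div_mul_cancel₀ _ h4.ne'] at h5
  linarith

lemma slope_neg_eventually (f : ℝ → ℝ) {a d : ℝ} (ha : 0 ≤ a)
    (hf : HasDerivWithinAt f d (Set.Ici 0) a) (hd : d < 0) :
    ∀ᶠ t in nhdsWithin a (Set.Ioi a), f t < f a := by
  rw [hasDerivWithinAt_iff_tendsto_slope] at hf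
  have hsub : Set.Ioi a ⊆ Set.Ici (0:ℝ) \ {a} := fun t ht =>
    ⟨le_trans ha (le_of_lt ht), by simp only [Set.mem_singleton_iff]; exact ne_of_gt ht⟩
  have h2 : Tendsto (slope f a) (nhdsWithin a (Set.Ioi a)) (nhds d) :=
    hf.mono_left (nhdsWithin_mono _ hsub)
  filter_upwards [h2.eventually (eventually_lt_nhds hd), self_mem_nhdsWithin] with t hslope hta
  have h4 : 0 < t - a := sub_pos.2 hta
  have h5 := mul_neg_of_neg_of_pos hslope h4
  rw [slope_def_field, div_mul_cancel₀ _ h4.ne'] at h5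
  linarith

/-- Invariance: solutions of the competition system stay in `[sm, sm·e^RM]` for `t ≥ 0`. -/
lemma sol_mem_Icc (sm RM σx σr : ℝ) (hsm : 0 < sm) (hRM : 0 < RM)
    {N : ℕ} (hN : 1 < N) (s0 Sa γ : Fin N → ℝ) (x : Fin N → EuclideanSpace ℝ (Fin 2))
    (hinit : ∀ i, sm < s0 i ∧ s0 i < Sa i)
    (hS : ∀ i, sm < Sa i ∧ Sa i < sm * Real.exp RM)
    (hγ : ∀ i, 0 < γ i)
    (s : Fin N → ℝ → ℝ) (hs : IsCompetitionSol sm RM σx σr s0 x Sa γ s) :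
    ∀ t, 0 ≤ t → ∀ i, s i t ∈ Set.Icc sm (sm * Real.exp RM) := by
  set E := sm * Real.exp RM with hE
  have h1e : (1:ℝ) < Real.exp RM := by
    have := Real.exp_lt_exp.2 hRM
    simpa [Real.exp_zero] using this
  have hsmE : sm < E := by rw [hE]; nlinarith
  have hN1 : (0:ℝ) < (N:ℝ) - 1 := by
    have : (1:ℝ) < (N:ℝ) := by exact_mod_cast hN
    linarith
  have hcont : ∀ i, ContinuousOn (s i) (Set.Ici 0) :=
    fun i t ht => ((hs i).2 t ht).continuousWithinAt
  by_contra hbad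
  push_neg at hbad
  obtain ⟨tb, htb0, ib, htib⟩ := hbad
  set B := {t : ℝ | 0 ≤ t ∧ ∃ i, s i t ∉ Set.Icc sm E} with hBdef
  have hBne : B.Nonempty := ⟨tb, htb0, ib, htib⟩
  have hBbdd : BddBelow B := ⟨0, fun b hb => hb.1⟩
  set c := sInf B with hc
  have hc0 : 0 ≤ c := le_csInf hBne (fun b hb => hb.1)
  have hlow : ∀ b ∈ B, c ≤ b := fun b hb => csInf_le hBbdd hb
  have good : ∀ τ, 0 ≤ τ → τ < c → ∀ i, s i τ ∈ Set.Icc sm E := by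
    intro τ hτ0 hτc i
    by_contra h
    exact absurd (hlow τ ⟨hτ0, i, h⟩) (not_le.2 hτc)
  have goodc : ∀ i, s i c ∈ Set.Icc sm E := by
    intro i
    rcases eq_or_lt_of_le hc0 with h0 | h0
    · rw [← h0, (hs i).1]
      exact ⟨(hinit i).1.le, by linarith [(hinit i).2, (hS i).2]⟩
    · have hT : Tendsto (s i) (nhdsWithin c (Set.Ico 0 c)) (nhds (s i c)) :=
        ((hcont i) c hc0).mono_left (nhdsWithin_mono _ (fun y hy => hy.1))
      have hNB : (nhdsWithin c (Set.Ico 0 c)).NeBot := by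
        rw [← mem_closure_iff_nhdsWithin_neBot, closure_Ico (ne_of_lt h0)]
        exact ⟨hc0, le_refl c⟩
      refine isClosed_Icc.mem_of_tendsto hT ?_
      filter_upwards [self_mem_nhdsWithin] with τ hτ
      exact good τ hτ.1 hτ.2 i
  -- competition index bounds at time c
  have hCb : ∀ i, 0 ≤ cIdx sm RM σx σr x s i c ∧ cIdx sm RM σx σr x s i c < 1 := by
    intro i
    have hcard : (Finset.univ.erase i).card = N - 1 := by
      rw [Finset.card_erase_of_mem (Finset.mem_univ i), Finset.card_univ, Fintype.card_fin]
    have hne : (Finset.univ.erase i).Nonempty := by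
      rw [← Finset.card_pos, hcard]; omega
    have hpb : ∀ j ∈ Finset.univ.erase i,
        0 ≤ pot sm RM σx σr (s i c) (s j c) (dist (x i) (x j)) ∧
        pot sm RM σx σr (s i c) (s j c) (dist (x i) (x j)) < 1 :=
      fun j _ => pot_mem sm RM σx σr _ _ _ hsm hRM (goodc j)
    have hsum0 : 0 ≤ ∑ j ∈ Finset.univ.erase i,
        pot sm RM σx σr (s i c) (s j c) (dist (x i) (x j)) :=
      Finset.sum_nonneg fun j hj => (hpb j hj).1
    have hsum1 : ∑ j ∈ Finset.univ.erase i,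
        pot sm RM σx σr (s i c) (s j c) (dist (x i) (x j)) < (N:ℝ) - 1 := by
      calc _ < ∑ _j ∈ Finset.univ.erase i, (1:ℝ) :=
            Finset.sum_lt_sum_of_nonempty hne fun j hj => (hpb j hj).2
        _ = (N:ℝ) - 1 := by
            rw [Finset.sum_const, hcard, nsmul_eq_mul, mul_one]
            have h1N : (1:ℕ) ≤ N := hN.le
            push_cast [Nat.cast_sub h1N]
            ring
    unfold cIdx
    constructor
    · positivity
    · rw [one_div, inv_mul_lt_iff₀ hN1, mul_one]
      exact hsum1
  -- each coordinate stays in Icc just after c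
  have hev : ∀ i, ∀ᶠ τ in nhdsWithin c (Set.Ioi c), s i τ ∈ Set.Icc sm E := by
    intro i
    have hTc : Tendsto (s i) (nhdsWithin c (Set.Ioi c)) (nhds (s i c)) :=
      ((hcont i) c hc0).mono_left
        (nhdsWithin_mono _ (fun y hy => le_trans hc0 (le_of_lt hy)))
    have hderiv := ((hs i).2 c hc0)
    obtain ⟨hC0, hC1⟩ := hCb i
    have hlogS0 : 0 < Real.log (Sa i / sm) :=
      Real.log_pos ((one_lt_div hsm).2 (hS i).1)
    rcases eq_or_lt_of_le (goodc i).2 with hhi | hhi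
    · -- upper face : derivative is negative
      have hlog : Real.log (s i c / sm) = RM := by
        rw [hhi, hE, mul_comm, mul_div_assoc, div_self hsm.ne', mul_one, Real.log_exp]
      have hlogS : Real.log (Sa i / sm) < RM := by
        rw [← Real.log_exp RM]
        apply Real.log_lt_log (div_pos (lt_trans hsm (hS i).1) hsm)
        rw [div_lt_iff₀ hsm]; linarith [(hS i).2]
      have hdneg : γ i * s i c * (Real.log (Sa i / sm) * (1 - cIdx sm RM σx σr x s i c)
          - Real.log (s i c / sm)) < 0 := by
        rw [hlog]
        have h7 : Real.log (Sa i / sm) * (1 - cIdx sm RM σx σr x s i c) - RM < 0 := by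
          nlinarith
        have h8 : 0 < γ i * s i c := by
          apply mul_pos (hγ i); rw [hhi]; nlinarith
        exact mul_neg_of_pos_of_neg h8 h7
      have h9 := slope_neg_eventually (s i) hc0 hderiv hdneg
      have h10 := hTc.eventually (isOpen_Ioi.eventually_mem
        (show sm < s i c by rw [hhi]; exact hsmE))
      filter_upwards [h9, h10] with τ h9' h10'
      exact ⟨le_of_lt h10', by rw [hhi] at h9'; exact h9'.le⟩
    · rcases eq_or_lt_of_le (goodc i).1 with hlo | hlo
      · -- lower face : derivative is positive
        have hlog : Real.log (s i c / sm) = 0 := by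
          rw [← hlo, div_self hsm.ne', Real.log_one]
        have hdpos : 0 < γ i * s i c * (Real.log (Sa i / sm) * (1 - cIdx sm RM σx σr x s i c)
            - Real.log (s i c / sm)) := by
          rw [hlog, sub_zero]
          have h8 : 0 < γ i * s i c := by
            apply mul_pos (hγ i); rw [← hlo]; exact hsm
          exact mul_pos h8 (mul_pos hlogS0 (by linarith))
        have h9 := slope_pos_eventually (s i) hc0 hderiv hdpos
        have h10 := hTc.eventually (isOpen_Iio.eventually_mem hhi)
        filter_upwards [h9, h10] with τ h9' h10'
        exact ⟨by rw [← hlo] at h9'; exact h9'.le, le_of_lt h10'⟩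
      · -- interior
        have h10 := hTc.eventually (isOpen_Ioo.eventually_mem
          (show s i c ∈ Set.Ioo sm E from ⟨hlo, hhi⟩))
        filter_upwards [h10] with τ hτ
        exact ⟨hτ.1.le, hτ.2.le⟩
  -- derive the contradiction
  have hall : ∀ᶠ τ in nhdsWithin c (Set.Ioi c), ∀ i, s i τ ∈ Set.Icc sm E :=
    Filter.eventually_all.2 hev
  obtain ⟨u, hu, hsub⟩ :=
    mem_nhdsGT_iff_exists_Ioc_subset.1 (eventually_iff.1 hall)
  have hub : ∀ b ∈ B, u ≤ b := by
    intro b hb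
    by_contra hcb
    push_neg at hcb
    obtain ⟨hb0, i, hbi⟩ := hb
    have hbc : c ≤ b := hlow b ⟨hb0, i, hbi⟩
    rcases eq_or_lt_of_le hbc with h | h
    · exact hbi (h ▸ goodc i)
    · exact hbi (hsub ⟨h, hcb.le⟩ i)
  exact absurd (le_csInf hBne hub) (not_le.2 hu)

/-- Computation of `hatC` against the empirical measure. -/
lemma hatC_emp (sm RM σx σr : ℝ) {N : ℕ} (hN : 0 < N)
    (x : Fin N → EuclideanSpace ℝ (Fin 2)) (Sa γ : Fin N → ℝ) (s : Fin N → ℝ → ℝ) (t : ℝ)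
    (a : ℝ) (x' : EuclideanSpace ℝ (Fin 2)) :
    hatC sm RM σx σr N a x' (empMeas x Sa γ s t)
      = ((N : ℝ) / ((N : ℝ) - 1)) *
          ((N : ℝ)⁻¹ * ∑ j : Fin N, pot sm RM σx σr a (s j t) (dist x' (x j)))
        - pot sm RM σx σr a a 0 / ((N : ℝ) - 1) := by
  have hf : Measurable (fun z : ℝ × EuclideanSpace ℝ (Fin 2) × ℝ × ℝ => (z.1, z.2.1)) :=
    measurable_fst.prodMk (measurable_fst.comp measurable_snd)
  have hg : Measurable (fun p : ℝ × EuclideanSpace ℝ (Fin 2) =>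
      pot sm RM σx σr a p.1 (dist x' p.2)) := by
    unfold pot
    have m1 : Measurable fun p : ℝ × EuclideanSpace ℝ (Fin 2) => Real.log (p.1 / sm) :=
      Real.measurable_log.comp (measurable_fst.div_const sm)
    have m2 : Measurable fun p : ℝ × EuclideanSpace ℝ (Fin 2) =>
        2 * RM * (1 + dist x' p.2 ^ 2 / σx ^ 2) :=
      ((continuous_const.mul (continuous_const.add
        (((continuous_const.dist continuous_snd).pow 2).div_const _))).measurable)
    have m3 : Measurable fun p : ℝ × EuclideanSpace ℝ (Fin 2) =>
        Real.tanh (Real.log (p.1 / a) / σr) :=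
      continuous_tanh'.measurable.comp
        ((Real.measurable_log.comp (measurable_fst.div_const a)).div_const σr)
    exact (m1.div m2).mul (measurable_const.add m3)
  unfold hatC empMeas
  rw [integral_map hf.aemeasurable hg.aestronglyMeasurable, integral_smul_measure,
    integral_finset_sum_measure (by
      intro i _
      refine ⟨(hg.comp hf).aestronglyMeasurable, ?_⟩
      rw [HasFiniteIntegral, lintegral_dirac]
      exact ENNReal.coe_lt_top)]
  simp only [integral_dirac]
  norm_num [ENNReal.toReal_inv, smul_eq_mul]

/-- along any solution of the empirical-flow equation, on its interval of
definition, the competition term `Ĉ_N` satisfies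
`−log(s(t)/s_m)/(2R_M(N−1)) ≤ Ĉ_N(s(t), x, μ̂_N(t)) ≤ N/(N−1) − log(s(t)/s_m)/(2R_M(N−1))`. -/
theorem stmt_5 (sm RM σx σr : ℝ) (hsm : 0 < sm) (hRM : 0 < RM) (hσx : 0 < σx) (hσr : 0 < σr)
    (N : ℕ) (hN : 1 < N) (s0 Sa γ : Fin N → ℝ) (x : Fin N → EuclideanSpace ℝ (Fin 2))
    (hinit : ∀ i, sm < s0 i ∧ s0 i < Sa i)
    (hS : ∀ i, sm < Sa i ∧ Sa i < sm * Real.exp RM)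
    (hγ : ∀ i, 0 < γ i)
    (s : Fin N → ℝ → ℝ) (hs : IsCompetitionSol sm RM σx σr s0 x Sa γ s)
    (s0' : ℝ) (x' : EuclideanSpace ℝ (Fin 2)) (S' γ' : ℝ)
    (h1 : sm < s0') (h2 : s0' < S') (h3 : sm < S') (h4 : S' < sm * Real.exp RM) (h5 : 0 ≤ γ')
    (J : Set ℝ) (hJ0 : (0 : ℝ) ∈ J) (hJsub : J ⊆ Set.Ici 0) (hJconn : J.OrdConnected)
    (σ : ℝ → ℝ) (hσ0 : σ 0 = s0')
    (hσ : ∀ t ∈ J,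
      HasDerivWithinAt σ
        (γ' * σ t * (Real.log (S' / sm) *
            (1 - hatC sm RM σx σr N (σ t) x' (empMeas x Sa γ s t))
          - Real.log (σ t / sm))) J t) :
    ∀ t ∈ J,
      -(Real.log (σ t / sm)) / (2 * RM * ((N : ℝ) - 1))
          ≤ hatC sm RM σx σr N (σ t) x' (empMeas x Sa γ s t) ∧
      hatC sm RM σx σr N (σ t) x' (empMeas x Sa γ s t)
          ≤ (N : ℝ) / ((N : ℝ) - 1) - Real.log (σ t / sm) / (2 * RM * ((N : ℝ) - 1)) := by
  intro t ht
  have ht0 : 0 ≤ t := hJsub ht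
  have hmem := sol_mem_Icc sm RM σx σr hsm hRM hN s0 Sa γ x hinit hS hγ s hs t ht0
  have hN1 : (0:ℝ) < (N:ℝ) - 1 := by
    have : (1:ℝ) < (N:ℝ) := by exact_mod_cast hN
    linarith
  have hN0 : (0:ℝ) < (N:ℝ) := by positivity
  set a := σ t with ha
  set P := ∑ j : Fin N, pot sm RM σx σr a (s j t) (dist x' (x j)) with hP
  have hP0 : 0 ≤ P :=
    Finset.sum_nonneg fun j _ =>
      (pot_mem sm RM σx σr a _ _ hsm hRM (hmem j)).1
  have hPN : P ≤ (N:ℝ) := by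
    calc P ≤ ∑ _j : Fin N, (1:ℝ) :=
          Finset.sum_le_sum fun j _ =>
            (pot_mem sm RM σx σr a _ _ hsm hRM (hmem j)).2.le
      _ = (N:ℝ) := by simp
  have hself : pot sm RM σx σr a a 0 = Real.log (a / sm) / (2 * RM) := by
    unfold pot
    have hlaa : Real.log (a / a) = 0 := by
      rcases eq_or_ne a 0 with h | h
      · simp [h]
      · simp [div_self h]
    rw [hlaa]
    norm_num [Real.tanh_zero]
  rw [hatC_emp sm RM σx σr (by omega) x Sa γ s t a x', ← hP, hself]
  have hkey : ((N : ℝ) / ((N : ℝ) - 1)) * ((N : ℝ)⁻¹ * P) = P / ((N:ℝ) - 1) := by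
    field_simp
  rw [hkey]
  set L := Real.log (a / sm) with hL
  have hQ : L / (2 * RM) / ((N:ℝ) - 1) = L / (2 * RM * ((N:ℝ) - 1)) := by
    rw [div_div]
  rw [hQ]
  constructor
  · have h6 : 0 ≤ P / ((N:ℝ) - 1) := div_nonneg hP0 hN1.le
    rw [neg_div]
    linarith
  · have h6 : P / ((N:ℝ) - 1) ≤ (N:ℝ) / ((N:ℝ) - 1) := by gcongr
    linarith
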